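/- For any centrally symmetric measurable set A in R^n (i.e., A = -A) and any vector x in R^n, the standard Gaussian measure satisfies γ_n(x + A) ≥ e^{-‖x‖²/2} · γ_n(A). -/

import Mathlib

open MeasureTheory Real
open scoped InnerProductSpace ENNReal

/-- The standard Gaussian probability measure on `ℝⁿ`. -/
noncomputable def stdGaussian (n : ℕ) : Measure (EuclideanSpace ℝ (Fin n)) :=
  volume.withDensity (fun y => ENNReal.ofReal ((2 * π) ^ (-(n : ℝ) / 2) * Real.exp (-‖y‖ ^ 2 / 2)))

lemma key_pointwise {E : Type*} [NormedAddCommGroup E] [InnerProductSpace ℝ E] (x a : E) :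
    2 * (Real.exp (-‖x‖ ^ 2 / 2) * Real.exp (-‖a‖ ^ 2 / 2)) ≤
      Real.exp (-‖x + a‖ ^ 2 / 2) + Real.exp (-‖x - a‖ ^ 2 / 2) := by
  have h1 : ‖x + a‖ ^ 2 = ‖x‖ ^ 2 + 2 * ⟪x, a⟫_ℝ + ‖a‖ ^ 2 := norm_add_sq_real x a
  have h2 : ‖x - a‖ ^ 2 = ‖x‖ ^ 2 - 2 * ⟪x, a⟫_ℝ + ‖a‖ ^ 2 := norm_sub_sq_real x a
  set t := ⟪x, a⟫_ℝ
  have e1 : Real.exp (-‖x + a‖ ^ 2 / 2)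
      = Real.exp (-‖x‖ ^ 2 / 2) * Real.exp (-‖a‖ ^ 2 / 2) * Real.exp (-t) := by
    rw [← Real.exp_add, ← Real.exp_add, h1]; ring_nf
  have e2 : Real.exp (-‖x - a‖ ^ 2 / 2)
      = Real.exp (-‖x‖ ^ 2 / 2) * Real.exp (-‖a‖ ^ 2 / 2) * Real.exp t := by
    rw [← Real.exp_add, ← Real.exp_add, h2]; ring_nf
  rw [e1, e2]
  have h3 : (2 : ℝ) ≤ Real.exp (-t) + Real.exp t := by
    nlinarith [Real.add_one_le_exp t, Real.add_one_le_exp (-t)]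
  nlinarith [Real.exp_pos (-‖x‖ ^ 2 / 2), Real.exp_pos (-‖a‖ ^ 2 / 2), Real.exp_pos t,
    Real.exp_pos (-t), mul_pos (Real.exp_pos (-‖x‖ ^ 2 / 2)) (Real.exp_pos (-‖a‖ ^ 2 / 2))]

/-- For any centrally symmetric measurable set `A ⊆ ℝⁿ` and any `x ∈ ℝⁿ`,
`γₙ(x + A) ≥ e^{-‖x‖²/2} γₙ(A)`. -/
theorem stmt_0 (n : ℕ) (A : Set (EuclideanSpace ℝ (Fin n)))
    (hA : MeasurableSet A) (hsymm : A = -A) (x : EuclideanSpace ℝ (Fin n)) :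
    ENNReal.ofReal (Real.exp (-‖x‖ ^ 2 / 2)) * stdGaussian n A ≤
      stdGaussian n ((fun a => x + a) '' A) := by
  set c : ℝ := (2 * π) ^ (-(n : ℝ) / 2) with hc
  have hc0 : 0 ≤ c := Real.rpow_nonneg (by positivity) _
  set g : EuclideanSpace ℝ (Fin n) → ℝ≥0∞ :=
    fun y => ENNReal.ofReal (c * Real.exp (-‖y‖ ^ 2 / 2)) with hg
  have hgmeas : Measurable g := by
    apply ENNReal.measurable_ofReal.comp
    exact (measurable_const.mul ((measurable_norm.pow measurable_const).neg.div_const 2).exp)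
  have himg : MeasurableSet ((fun a => x + a) '' A) := by
    have : (fun a => x + a) '' A = (fun y => -x + y) ⁻¹' A := by
      ext y
      simp only [Set.mem_image, Set.mem_preimage]
      constructor
      · rintro ⟨a, ha, rfl⟩; simpa using ha
      · intro h; exact ⟨-x + y, h, by abel⟩
    rw [this]
    exact (measurable_const_add (-x)).comp measurable_id |>.comp measurable_id
      |> fun _ => hA.preimage (measurable_const_add (-x))
  -- express measures as lintegrals
  have hmA : stdGaussian n A = ∫⁻ a in A, g a := by
    rw [stdGaussian, withDensity_apply _ hA]
  have hmI : stdGaussian n ((fun a => x + a) '' A) = ∫⁻ a in A, g (x + a) := by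
    rw [stdGaussian, withDensity_apply _ himg]
    exact ((measurePreserving_add_left volume x).setLIntegral_comp_emb
      (MeasurableEquiv.addLeft x).measurableEmbedding g A).symm
  -- symmetry: ∫ g(x+a) = ∫ g(x-a)
  have hneg : (∫⁻ a in A, g (x + a)) = ∫⁻ a in A, g (x - a) := by
    have himA : Neg.neg '' A = A := by
      conv_rhs => rw [hsymm]
      ext y; simp [Set.mem_neg]
    calc (∫⁻ a in A, g (x + a)) = ∫⁻ a in Neg.neg '' A, g (x + a) := by rw [himA]
      _ = ∫⁻ a in A, g (x + -a) :=
          ((Measure.measurePreserving_neg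
              (volume : Measure (EuclideanSpace ℝ (Fin n)))).setLIntegral_comp_emb
            (MeasurableEquiv.neg _).measurableEmbedding (fun b => g (x + b)) A).symm
      _ = ∫⁻ a in A, g (x - a) := by
          simp only [sub_eq_add_neg]
  set I : ℝ≥0∞ := ∫⁻ a in A, g (x + a) with hI
  have hf1 : Measurable fun a => g (x + a) := hgmeas.comp (measurable_const_add x)
  have key : 2 * (ENNReal.ofReal (Real.exp (-‖x‖ ^ 2 / 2)) * stdGaussian n A) ≤ 2 * I := by
    have hadd : (∫⁻ a in A, (g (x + a) + g (x - a)))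
        = (∫⁻ a in A, g (x + a)) + ∫⁻ a in A, g (x - a) :=
      lintegral_add_left hf1 _
    have h2I : 2 * I = ∫⁻ a in A, (g (x + a) + g (x - a)) := by
      have hns : (∫⁻ a in A, g (x - a)) = I := hneg.symm
      rw [hadd, hns]
      all_goals ring
    rw [h2I, hmA]
    rw [← lintegral_const_mul _ hgmeas, ← lintegral_const_mul _ (hgmeas.const_mul _)]
    apply lintegral_mono
    intro a
    calc 2 * (ENNReal.ofReal (Real.exp (-‖x‖ ^ 2 / 2)) * g a)
        = ENNReal.ofReal (2 * (Real.exp (-‖x‖ ^ 2 / 2) * (c * Real.exp (-‖a‖ ^ 2 / 2)))) := by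
          rw [hg]
          rw [← ENNReal.ofReal_mul (Real.exp_pos _).le,
            ENNReal.ofReal_mul (by norm_num : (0:ℝ) ≤ 2), ENNReal.ofReal_ofNat]
      _ ≤ ENNReal.ofReal (c * Real.exp (-‖x + a‖ ^ 2 / 2) + c * Real.exp (-‖x - a‖ ^ 2 / 2)) := by
          apply ENNReal.ofReal_le_ofReal
          nlinarith [key_pointwise x a, Real.exp_pos (-‖x + a‖ ^ 2 / 2),
            Real.exp_pos (-‖x - a‖ ^ 2 / 2)]
      _ = g (x + a) + g (x - a) := by
          rw [hg, ENNReal.ofReal_add (by positivity) (by positivity)]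
  rw [hmI]
  exact (ENNReal.mul_le_mul_iff_right two_ne_zero ENNReal.ofNat_ne_top).mp key
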